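/- Let R be a generalized curvature tensor and B a self-adjoint endomorphism that is R-compatible. Then the Veblen-type identity holds: R(Y,W,Z,BX) + R(Z,X,W,BY) + R(W,Y,X,BZ) + R(X,Z,Y,BW) = 0 for all X,Y,Z,W. -/
import Mathlib


open RealInnerProductSpace

/-- Veblen-type identity: if `R` is a generalized curvature tensor and `B` a
self-adjoint `R`-compatible endomorphism then
`R(Y,W,Z,BX) + R(Z,X,W,BY) + R(W,Y,X,BZ) + R(X,Z,Y,BW) = 0`. -/
theorem veblen_identity_of_compatible
    {V : Type*} [NormedAddCommGroup V] [InnerProductSpace ℝ V] [FiniteDimensional ℝ V]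
    (R : V →ₗ[ℝ] V →ₗ[ℝ] V →ₗ[ℝ] V →ₗ[ℝ] ℝ)
    (hanti1 : ∀ X Y Z W : V, R X Y Z W = - R Y X Z W)
    (hanti2 : ∀ X Y Z W : V, R X Y Z W = - R X Y W Z)
    (hpair : ∀ X Y Z W : V, R X Y Z W = R Z W X Y)
    (hbianchi : ∀ X Y Z W : V, R X Y Z W + R Y Z X W + R Z X Y W = 0)
    (B : V →ₗ[ℝ] V)
    (hB : ∀ X Y : V, ⟪B X, Y⟫ = ⟪X, B Y⟫)
    (hcompat : ∀ X Y Z W : V, R (B X) Y Z W + R (B Y) Z X W + R (B Z) X Y W = 0) :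
    ∀ X Y Z W : V,
      R Y W Z (B X) + R Z X W (B Y) + R W Y X (B Z) + R X Z Y (B W) = 0 := by
  intro X Y Z W
  have h1 := hcompat X Z Y W
  have h2 := hcompat Y W Z X
  have h3 := hcompat Z X W Y
  have h4 := hcompat W Y X Z
  have e1 : R Y W Z (B X) = - R (B X) Z Y W := by rw [hpair, hanti1]
  have e2 : R Z X W (B Y) = - R (B Y) W Z X := by rw [hpair, hanti1]
  have e3 : R W Y X (B Z) = - R (B Z) X W Y := by rw [hpair, hanti1]
  have e4 : R X Z Y (B W) = - R (B W) Y X Z := by rw [hpair, hanti1]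
  have a1 := hanti2 (B Y) X Z W
  have a2 := hanti2 (B Z) Y X W
  have a3 := hanti2 (B W) Z Y X
  have a4 := hanti2 (B X) W Z Y
  linarith
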